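/- Every multiple-closed set of monomials has a unique minimal generating set: if M is a multiple-closed set of monomials in K[y_1,...,y_n], then there is a unique finite set G of monomials, none of which divides another, whose set of monomial multiples equals M. -/

import Mathlib

/-- Every multiple-closed set of monomials has a unique minimal generating set:
a unique finite set `G` of monomials, none of which divides another
(divisibility of monomials is `≤` componentwise on exponent vectors, i.e.
`g ≤ x ↔ ∃ r, x = r + g`), whose set of monomial multiples equals `M`. -/
theorem multiple_closed_unique_minimal_generating_set (n : ℕ) (M : Set (Fin n → ℕ))
    (hM : ∀ m ∈ M, ∀ r : Fin n → ℕ, r + m ∈ M) :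
    ∃! G : Finset (Fin n → ℕ),
      (∀ g ∈ G, ∀ g' ∈ G, g ≤ g' → g = g') ∧
      M = { x | ∃ g ∈ G, ∃ r : Fin n → ℕ, x = r + g } := by
  -- key: x = r + g for some r iff g ≤ x
  have key : ∀ g x : Fin n → ℕ, (∃ r : Fin n → ℕ, x = r + g) ↔ g ≤ x := by
    intro g x
    constructor
    · rintro ⟨r, rfl⟩ i; simp
    · intro h; exact ⟨x - g, funext fun i => (Nat.sub_add_cancel (h i)).symm⟩
  -- set of minimal elements of M
  set S : Set (Fin n → ℕ) := {m | m ∈ M ∧ ∀ m' ∈ M, m' ≤ m → m' = m} with hS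
  -- M is well-founded on < (Dickson)
  have hpwo : M.IsPWO := Set.isPWO_of_wellQuasiOrderedLE M
  have hwf : WellFounded fun a b : Fin n → ℕ => a < b ∧ a ∈ M ∧ b ∈ M :=
    Set.wellFoundedOn_iff.mp hpwo.isWF
  -- every element of M is above some minimal element
  have hmin : ∀ x ∈ M, ∃ m ∈ S, m ≤ x := by
    intro x hx
    obtain ⟨m, ⟨hmM, hmx⟩, hm⟩ := hwf.has_min {m | m ∈ M ∧ m ≤ x} ⟨x, hx, le_refl x⟩
    refine ⟨m, ⟨hmM, fun m' hm' hle => ?_⟩, hmx⟩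
    by_contra hne
    exact hm m' ⟨hm', hle.trans hmx⟩ ⟨lt_of_le_of_ne hle hne, hm', hmM⟩
  -- S is an antichain, hence finite
  have hanti : IsAntichain (· ≤ ·) S := by
    rintro a ⟨haM, _⟩ b ⟨hbM, hb⟩ hne hle
    exact hne (hb a haM hle)
  have hfin : S.Finite := hanti.finite_of_partiallyWellOrderedOn (hpwo.mono fun x hx => hx.1)
  refine ⟨hfin.toFinset, ⟨?_, ?_⟩, ?_⟩
  · intro g hg g' hg' hle
    rw [Set.Finite.mem_toFinset] at hg hg'
    exact hg'.2 g hg.1 hle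
  · ext x
    simp only [Set.mem_setOf_eq, Set.Finite.mem_toFinset]
    constructor
    · intro hx
      obtain ⟨m, hmS, hmx⟩ := hmin x hx
      exact ⟨m, hmS, (key m x).mpr hmx⟩
    · rintro ⟨g, ⟨hgM, _⟩, r, rfl⟩
      exact hM g hgM r
  · -- uniqueness: any such G equals S
    rintro G ⟨hGanti, hGgen⟩
    have hGM : ∀ g ∈ G, g ∈ M := fun g hg => by
      rw [hGgen]; exact ⟨g, hg, 0, by simp⟩
    have : ∀ g, g ∈ G ↔ g ∈ S := by
      intro g
      constructor
      · intro hg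
        refine ⟨hGM g hg, fun m' hm' hle => ?_⟩
        rw [hGgen] at hm'
        obtain ⟨g', hg', r, rfl⟩ := hm'
        have hle' : g' ≤ r + g' := (key g' _).mp ⟨r, rfl⟩
        have := hGanti g' hg' g hg (hle'.trans hle)
        subst this
        exact le_antisymm hle hle'
      · rintro ⟨hgM, hgmin⟩
        rw [hGgen] at hgM
        obtain ⟨g', hg', r, rfl⟩ := hgM
        have hle' : g' ≤ r + g' := (key g' _).mp ⟨r, rfl⟩
        rwa [← hgmin g' (hGM g' hg') hle']
    ext g
    rw [this g, Set.Finite.mem_toFinset]
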